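/- Let U be a subgroup of index m in a group Γ, and let k ≥ 1. Then the number of subgroups H of Γ with U ≤ H and |H : U| ≤ k is at most m^(log₂ k). -/

import Mathlib

open Subgroup

private lemma aux_sup_closure {Γ : Type*} [Group Γ] (U : Subgroup Γ) {n : ℕ}
    (g₁ g₂ : Fin n → Γ) (h : ∀ i, (g₁ i)⁻¹ * g₂ i ∈ U) :
    U ⊔ Subgroup.closure (Set.range g₁) = U ⊔ Subgroup.closure (Set.range g₂) := by
  have key : ∀ (a b : Fin n → Γ), (∀ i, (a i)⁻¹ * b i ∈ U) →
      U ⊔ Subgroup.closure (Set.range b) ≤ U ⊔ Subgroup.closure (Set.range a) := by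
    intro a b hab
    refine sup_le le_sup_left ((Subgroup.closure_le _).2 ?_)
    rintro _ ⟨i, rfl⟩
    have h1 : a i ∈ U ⊔ Subgroup.closure (Set.range a) :=
      Subgroup.mem_sup_right (Subgroup.subset_closure ⟨i, rfl⟩)
    have h2 : (a i)⁻¹ * b i ∈ U ⊔ Subgroup.closure (Set.range a) := Subgroup.mem_sup_left (hab i)
    have := mul_mem h1 h2
    simpa using this
  refine le_antisymm (key g₂ g₁ fun i => ?_) (key g₁ g₂ h)
  simpa using inv_mem (h i)

private lemma aux_gen {Γ : Type*} [Group Γ] :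
    ∀ (n : ℕ) (U H : Subgroup Γ), U ≤ H → U.relIndex H ≠ 0 →
      Nat.log 2 (U.relIndex H) ≤ n →
      ∃ g : Fin n → Γ, H = U ⊔ Subgroup.closure (Set.range g) := by
  intro n
  induction n with
  | zero =>
    intro U H hUH hne hlog
    have h1 : U.relIndex H = 1 := by
      by_contra h
      have h2 : 2 ≤ U.relIndex H := by omega
      have := Nat.log_pos (by norm_num) h2
      omega
    have : H ≤ U := (Subgroup.relIndex_eq_one).1 h1
    refine ⟨fun i => i.elim0, ?_⟩
    have hr : Set.range (fun i : Fin 0 => i.elim0 (α := Γ)) = ∅ := by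
      simp [Set.range_eq_empty]
    rw [hr, Subgroup.closure_empty, sup_bot_eq]
    exact le_antisymm this hUH
  | succ n ih =>
    intro U H hUH hne hlog
    by_cases hHU : H ≤ U
    · refine ⟨fun _ => 1, ?_⟩
      have : Set.range (fun _ : Fin (n+1) => (1 : Γ)) = {1} := by
        simp [Set.range_const]
      rw [this, Subgroup.closure_singleton_one, sup_bot_eq]
      exact le_antisymm hHU hUH
    · obtain ⟨x, hxH, hxU⟩ := SetLike.exists_of_lt (lt_of_le_of_ne hUH
        (fun h => hHU (le_of_eq h.symm)))
      set K : Subgroup Γ := U ⊔ Subgroup.closure {x} with hK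
      have hUK : U ≤ K := le_sup_left
      have hKH : K ≤ H := sup_le hUH ((Subgroup.closure_le _).2 (by simpa using hxH))
      have hxK : x ∈ K := Subgroup.mem_sup_right (Subgroup.subset_closure rfl)
      have htower : U.relIndex K * K.relIndex H = U.relIndex H :=
        Subgroup.relIndex_mul_relIndex U K H hUK hKH
      have hUKne : U.relIndex K ≠ 0 := by
        intro h; rw [h, zero_mul] at htower; exact hne htower.symm
      have hKHne : K.relIndex H ≠ 0 := by
        intro h; rw [h, mul_zero] at htower; exact hne htower.symm
      have hUKne1 : U.relIndex K ≠ 1 := by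
        intro h
        exact hxU ((Subgroup.relIndex_eq_one).1 h hxK)
      have hUK2 : 2 ≤ U.relIndex K := by omega
      have hdouble : 2 * K.relIndex H ≤ U.relIndex H := by
        calc 2 * K.relIndex H ≤ U.relIndex K * K.relIndex H :=
              Nat.mul_le_mul_right _ hUK2
          _ = U.relIndex H := htower
      have hlog' : Nat.log 2 (K.relIndex H) ≤ n := by
        have h1 : Nat.log 2 (K.relIndex H * 2) = Nat.log 2 (K.relIndex H) + 1 :=
          Nat.log_mul_base (by norm_num) hKHne
        have h2 : Nat.log 2 (K.relIndex H * 2) ≤ Nat.log 2 (U.relIndex H) :=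
          Nat.log_mono_right (by omega)
        omega
      obtain ⟨g, hg⟩ := ih K H hKH hKHne hlog'
      refine ⟨Fin.cons x g, ?_⟩
      rw [hg, hK, Fin.range_cons, sup_assoc, ← Subgroup.closure_union,
        Set.singleton_union]

theorem count_intermediate_subgroups {Γ : Type*} [Group Γ] (U : Subgroup Γ)
    (m k : ℕ) (hm : U.index = m) (hm0 : m ≠ 0) (hk : 1 ≤ k) :
    (Nat.card {H : Subgroup Γ // U ≤ H ∧ U.relIndex H ≤ k} : ℝ) ≤
      (m : ℝ) ^ Real.logb 2 k := by
  classical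
  haveI : U.FiniteIndex := ⟨by rw [hm]; exact hm0⟩
  set n := Nat.log 2 k with hn
  -- for each H in the set, pick generators
  have hgen : ∀ H : {H : Subgroup Γ // U ≤ H ∧ U.relIndex H ≤ k},
      ∃ g : Fin n → Γ, (H : Subgroup Γ) = U ⊔ Subgroup.closure (Set.range g) := by
    rintro ⟨H, hUH, hrel⟩
    have hne : U.relIndex H ≠ 0 := by
      intro h0
      have := Subgroup.relIndex_mul_index hUH
      rw [h0, zero_mul, hm] at this
      exact hm0 this.symm
    exact aux_gen n U H hUH hne (Nat.log_mono_right hrel)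
  choose g hg using hgen
  -- the map to tuples of cosets is injective
  have hinj : Function.Injective
      (fun H : {H : Subgroup Γ // U ≤ H ∧ U.relIndex H ≤ k} =>
        (fun i => (QuotientGroup.mk (g H i) : Γ ⧸ U))) := by
    intro H₁ H₂ hfeq
    have : ∀ i, (g H₁ i)⁻¹ * g H₂ i ∈ U := by
      intro i
      have := congrFun hfeq i
      exact (QuotientGroup.eq).1 this
    have heq := aux_sup_closure U (g H₁) (g H₂) this
    exact Subtype.ext (by rw [hg H₁, hg H₂, heq])
  have hcard : Nat.card {H : Subgroup Γ // U ≤ H ∧ U.relIndex H ≤ k} ≤ m ^ n := by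
    have h1 := Nat.card_le_card_of_injective _ hinj
    have h2 : Nat.card (Fin n → Γ ⧸ U) = m ^ n := by
      rw [Nat.card_fun, Nat.card_eq_fintype_card (α := Fin n), Fintype.card_fin,
        show Nat.card (Γ ⧸ U) = U.index from rfl, hm]
    omega
  -- now the real-number comparison
  have hm1 : (1 : ℝ) ≤ (m : ℝ) := by exact_mod_cast Nat.one_le_iff_ne_zero.2 hm0
  calc (Nat.card {H : Subgroup Γ // U ≤ H ∧ U.relIndex H ≤ k} : ℝ)
      ≤ ((m : ℝ) ^ n : ℝ) := by exact_mod_cast hcard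
    _ = (m : ℝ) ^ (n : ℝ) := by rw [Real.rpow_natCast]
    _ ≤ (m : ℝ) ^ Real.logb 2 k := by
        apply Real.rpow_le_rpow_of_exponent_le hm1
        have h2n : (2 : ℝ) ^ (n : ℝ) ≤ (k : ℝ) := by
          rw [Real.rpow_natCast]
          exact_mod_cast Nat.pow_log_le_self 2 (by omega)
        exact (Real.le_logb_iff_rpow_le (by norm_num) (by exact_mod_cast hk : (0:ℝ) < k)).2 h2n
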